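/- Let ρ₁, …, ρ_I : L^∞ → ℝ be convex and cash-invariant with ρ_i(0) = 0 for every i. Let B = (B₁, …, B_n) ∈ (L^∞)^n, let a₁, …, a_I ∈ ℝ^n with Σ_{i=1}^I a_i = 0, and suppose there exist price vectors p, p̂ ∈ ℝ^n such that for every i: ρ_i( a_i·B − a_i·p ) ≤ 0 and ρ_i( −a_i·B + a_i·p̂ ) ≤ 0 (i.e., both the allocation and its negative are mutually agreeable, at prices p and p̂ respectively). Then a_i·p = a_i·p̂ for every i, and ρ_i( a_i·B ) + ρ_i( −a_i·B ) ≤ 0 for every i. -/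

import Mathlib

open MeasureTheory Filter Topology

/-- If `ρ_i` are convex and cash-invariant with `ρ_i(0) = 0`, and the
allocation `(a_i)` of the bundle `B` (with `Σ a_i = 0`) is mutually agreeable at price
`p` while its negative is mutually agreeable at price `p̂`, then `a_i·p = a_i·p̂` for
every `i` and `ρ_i(a_i·B) + ρ_i(−a_i·B) ≤ 0` for every `i`. -/
theorem stmt11
    {Ω : Type*} [MeasurableSpace Ω] (P : Measure Ω) [IsProbabilityMeasure P]
    {I n : ℕ} (ρ : Fin I → Lp ℝ ⊤ P → ℝ)
    (hconv : ∀ i, ConvexOn ℝ Set.univ (ρ i))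
    (hcash : ∀ i (X : Lp ℝ ⊤ P) (m : ℝ),
      ρ i (X + (memLp_const m).toLp (fun _ => m)) = ρ i X - m)
    (hzero : ∀ i, ρ i 0 = 0)
    (B : Fin n → Lp ℝ ⊤ P)
    (a : Fin I → Fin n → ℝ) (hsum : ∑ i, a i = (0 : Fin n → ℝ))
    (p phat : Fin n → ℝ)
    (hp : ∀ i, ρ i (∑ j, a i j • B j +
      (memLp_const (-(∑ j, a i j * p j))).toLp (fun _ => -(∑ j, a i j * p j))) ≤ 0)
    (hphat : ∀ i, ρ i (-(∑ j, a i j • B j) +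
      (memLp_const (∑ j, a i j * phat j)).toLp (fun _ => ∑ j, a i j * phat j)) ≤ 0) :
    (∀ i, ∑ j, a i j * p j = ∑ j, a i j * phat j) ∧
    (∀ i, ρ i (∑ j, a i j • B j) + ρ i (-(∑ j, a i j • B j)) ≤ 0) := by
  set X : Fin I → Lp ℝ ⊤ P := fun i => ∑ j, a i j • B j with hX
  -- From hp and cash invariance: ρ i (X i) ≤ -(a i · p)
  have h1 : ∀ i, ρ i (X i) ≤ -(∑ j, a i j * p j) := by
    intro i
    have := hp i
    rw [hcash i (X i) (-(∑ j, a i j * p j))] at this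
    linarith
  -- From hphat: ρ i (-(X i)) ≤ a i · phat
  have h2 : ∀ i, ρ i (-(X i)) ≤ ∑ j, a i j * phat j := by
    intro i
    have := hphat i
    rw [hcash i (-(X i)) (∑ j, a i j * phat j)] at this
    linarith
  -- Convexity: 0 = ρ i 0 ≤ ½ ρ i (X i) + ½ ρ i (-(X i))
  have h3 : ∀ i, 0 ≤ ρ i (X i) + ρ i (-(X i)) := by
    intro i
    have hc := (hconv i).2 (Set.mem_univ (X i)) (Set.mem_univ (-(X i)))
      (by norm_num : (0:ℝ) ≤ 1/2) (by norm_num : (0:ℝ) ≤ 1/2) (by norm_num)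
    have hmid : (1/2 : ℝ) • X i + (1/2 : ℝ) • (-(X i)) = 0 := by
      rw [smul_neg]; exact add_neg_cancel _
    rw [hmid, hzero i] at hc
    simp only [smul_eq_mul] at hc
    linarith
  -- Pointwise: a i · p ≤ a i · phat
  have h4 : ∀ i, ∑ j, a i j * p j ≤ ∑ j, a i j * phat j := by
    intro i
    have := h3 i
    have := h1 i
    have := h2 i
    linarith
  -- Sums over i are both 0
  have hsj : ∀ j, ∑ i, a i j = 0 := fun j => by simpa using congrFun hsum j
  have hsp : ∀ q : Fin n → ℝ, ∑ i, ∑ j, a i j * q j = 0 := by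
    intro q
    rw [Finset.sum_comm]
    simp only [← Finset.sum_mul, hsj, zero_mul, Finset.sum_const_zero]
  have heq : ∀ i, ∑ j, a i j * p j = ∑ j, a i j * phat j := by
    have : ∑ i, ∑ j, a i j * p j = ∑ i, ∑ j, a i j * phat j := by
      rw [hsp p, hsp phat]
    intro i
    exact (Finset.sum_eq_sum_iff_of_le (fun i _ => h4 i)).mp this i (Finset.mem_univ i)
  refine ⟨heq, fun i => ?_⟩
  have := h1 i
  have := h2 i
  have := heq i
  linarith
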